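/- Let N ≥ 2, ρ > 0, a ∈ EuclideanSpace ℝ (Fin N), and r ≠ a. Set I_a(r) = ((ρ² + ‖a‖²)/‖r − a‖²)·(r − a) + a. Then ‖I_a(r)‖² + ρ² = (ρ² + ‖a‖²)·(‖r‖² + ρ²)/‖r − a‖²; consequently, for any n₀ ∈ ℝ, the fish-eye index n_fe(x) = 2 n₀ ρ²/(‖x‖² + ρ²) satisfies n_fe(I_a(r)) = (‖r − a‖²/(ρ² + ‖a‖²)) · n_fe(r). -/

import Mathlib

theorem fisheye_index_inversion_identity
    {N : ℕ} (hN : 2 ≤ N) (ρ : ℝ) (hρ : 0 < ρ)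
    (a r : EuclideanSpace ℝ (Fin N)) (hr : r ≠ a)
    (Ia : EuclideanSpace ℝ (Fin N) → EuclideanSpace ℝ (Fin N))
    (hIa : Ia = fun x => ((ρ ^ 2 + ‖a‖ ^ 2) / ‖x - a‖ ^ 2) • (x - a) + a) :
    ‖Ia r‖ ^ 2 + ρ ^ 2
        = (ρ ^ 2 + ‖a‖ ^ 2) * (‖r‖ ^ 2 + ρ ^ 2) / ‖r - a‖ ^ 2 ∧
      ∀ n₀ : ℝ,
        2 * n₀ * ρ ^ 2 / (‖Ia r‖ ^ 2 + ρ ^ 2)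
          = (‖r - a‖ ^ 2 / (ρ ^ 2 + ‖a‖ ^ 2)) * (2 * n₀ * ρ ^ 2 / (‖r‖ ^ 2 + ρ ^ 2)) := by
  have hd : ‖r - a‖ ≠ 0 := by
    simpa [sub_eq_zero] using hr
  have hd2 : ‖r - a‖ ^ 2 ≠ 0 := pow_ne_zero _ hd
  have hK : (0:ℝ) < ρ ^ 2 + ‖a‖ ^ 2 :=
    add_pos_of_pos_of_nonneg (pow_pos hρ 2) (by positivity)
  have hRr : (0:ℝ) < ‖r‖ ^ 2 + ρ ^ 2 :=
    add_pos_of_nonneg_of_pos (by positivity) (pow_pos hρ 2)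
  have hdeq : ‖r - a‖ ^ 2 = ‖r‖ ^ 2 - 2 * inner ℝ r a + ‖a‖ ^ 2 := by
    rw [@norm_sub_sq_real]
  have key : ‖Ia r‖ ^ 2 + ρ ^ 2
      = (ρ ^ 2 + ‖a‖ ^ 2) * (‖r‖ ^ 2 + ρ ^ 2) / ‖r - a‖ ^ 2 := by
    subst hIa
    simp only
    rw [@norm_add_sq_real, norm_smul, inner_smul_left]
    rw [show (inner ℝ (r - a) a : ℝ) = inner ℝ r a - inner ℝ a a by
      rw [inner_sub_left]]
    rw [real_inner_self_eq_norm_sq]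
    simp only [Real.norm_eq_abs, starRingEnd_apply, star_trivial]
    rw [mul_pow, sq_abs]
    set t : ℝ := inner ℝ r a with ht
    field_simp
    linear_combination (ρ ^ 2 + ‖a‖ ^ 2) * hdeq
  refine ⟨key, fun n₀ => ?_⟩
  rw [key]
  rw [div_div_eq_mul_div]
  field_simp
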